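/- Assume c ≠ 0 and hypothesis (R-H): A > 0, A(B−E) > C−E(b₁+b₂), D > Eb₁b₂, and (C−E(b₁+b₂))·(A(B−E)−C+E(b₁+b₂)) > A²(D−Eb₁b₂). Suppose the auxiliary quartic h has at least one positive real root, let Ω = {ω > 0 : h(ω²) = 0} (a finite nonempty set), and let τ₀ = min{τ^{(0)}(ω) : ω ∈ Ω}, where τ^{(0)}(ω) = arccos(b*(ω))/(2ω) if a*(ω) ≥ 0 and τ^{(0)}(ω) = (2π − arccos b*(ω))/(2ω) if a*(ω) < 0. Then for every delay τ with 0 ≤ τ < τ₀, every complex root λ of P(λ) = 0 satisfies Re λ < 0. -/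

import Mathlib

noncomputable section

/-- Coefficient A = b₁+b₂−2a -/
def cA (a b₁ b₂ : ℝ) : ℝ := b₁ + b₂ - 2*a
/-- Coefficient B = b₁b₂−2a(b₁+b₂)+a²+2 -/
def cB (a b₁ b₂ : ℝ) : ℝ := b₁*b₂ - 2*a*(b₁+b₂) + a^2 + 2
/-- Coefficient C = (a²+1)(b₁+b₂)−2ab₁b₂−2a -/
def cC (a b₁ b₂ : ℝ) : ℝ := (a^2+1)*(b₁+b₂) - 2*a*b₁*b₂ - 2*a
/-- Coefficient D = a²b₁b₂−a(b₁+b₂)+1 -/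
def cD (a b₁ b₂ : ℝ) : ℝ := a^2*b₁*b₂ - a*(b₁+b₂) + 1
/-- Coefficient E = c² -/
def cE (c : ℝ) : ℝ := c^2
/-- P̂ = A²−2B -/
def qP (a b₁ b₂ c : ℝ) : ℝ := (cA a b₁ b₂)^2 - 2*(cB a b₁ b₂)
/-- Q̂ = B²+2D−2AC−E² -/
def qQ (a b₁ b₂ c : ℝ) : ℝ :=
  (cB a b₁ b₂)^2 + 2*(cD a b₁ b₂) - 2*(cA a b₁ b₂)*(cC a b₁ b₂) - (cE c)^2
/-- R̂ = C²−2BD−E²(b₁²+b₂²) -/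
def qR (a b₁ b₂ c : ℝ) : ℝ :=
  (cC a b₁ b₂)^2 - 2*(cB a b₁ b₂)*(cD a b₁ b₂) - (cE c)^2*(b₁^2+b₂^2)
/-- Ŝ = D²−E²(b₁b₂)² -/
def qS (a b₁ b₂ c : ℝ) : ℝ := (cD a b₁ b₂)^2 - (cE c)^2*(b₁*b₂)^2
/-- Auxiliary quartic h(z) = z⁴+P̂z³+Q̂z²+R̂z+Ŝ -/
def hq (a b₁ b₂ c z : ℝ) : ℝ :=
  z^4 + qP a b₁ b₂ c * z^3 + qQ a b₁ b₂ c * z^2 + qR a b₁ b₂ c * z + qS a b₁ b₂ c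
/-- Derivative h′(z) = 4z³+3P̂z²+2Q̂z+R̂ -/
def hq' (a b₁ b₂ c z : ℝ) : ℝ :=
  4*z^3 + 3*qP a b₁ b₂ c * z^2 + 2*qQ a b₁ b₂ c * z + qR a b₁ b₂ c
/-- Characteristic function P(λ) = λ⁴+Aλ³+Bλ²+Cλ+D − E(λ+b₁)(λ+b₂)e^{−2λτ} -/
def charP (a b₁ b₂ c τ : ℝ) (z : ℂ) : ℂ :=
  z^4 + (cA a b₁ b₂ : ℂ)*z^3 + (cB a b₁ b₂ : ℂ)*z^2 + (cC a b₁ b₂ : ℂ)*z + (cD a b₁ b₂ : ℂ)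
    - (cE c : ℂ) * (z + (b₁:ℂ)) * (z + (b₂:ℂ)) * Complex.exp (-(2*z*(τ:ℂ)))
/-- Denominator N(ω) = E[(b₁+b₂)²ω² + (ω²−b₁b₂)²] -/
def Nden (a b₁ b₂ c ω : ℝ) : ℝ := cE c * ((b₁+b₂)^2*ω^2 + (ω^2 - b₁*b₂)^2)
/-- a*(ω) -/
def astar (a b₁ b₂ c ω : ℝ) : ℝ :=
  ((ω^4 - cB a b₁ b₂ * ω^2 + cD a b₁ b₂)*(b₁+b₂)*ω
    + (cA a b₁ b₂ * ω^3 - cC a b₁ b₂ * ω)*(b₁*b₂ - ω^2)) / Nden a b₁ b₂ c ω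
/-- b*(ω) -/
def bstar (a b₁ b₂ c ω : ℝ) : ℝ :=
  ((ω^4 - cB a b₁ b₂ * ω^2 + cD a b₁ b₂)*(b₁*b₂ - ω^2)
    + (-(cA a b₁ b₂) * ω^3 + cC a b₁ b₂ * ω)*(b₁+b₂)*ω) / Nden a b₁ b₂ c ω
/-- The critical delays τ^{(j)}(ω). -/
def tauJ (a b₁ b₂ c ω : ℝ) (j : ℕ) : ℝ :=
  if 0 ≤ astar a b₁ b₂ c ω then
    (Real.arccos (bstar a b₁ b₂ c ω) + 2*j*Real.pi) / (2*ω)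
  else
    (2*Real.pi - Real.arccos (bstar a b₁ b₂ c ω) + 2*j*Real.pi) / (2*ω)


open Metric in
lemma exists_zero_of_close (g : ℂ → ℂ) (hg : Differentiable ℂ g) (z₀ : ℂ) (r m : ℝ)
    (hr : 0 < r) (hbig : ∀ z ∈ sphere z₀ r, m ≤ ‖g z‖) (hsmall : ‖g z₀‖ < m) :
    ∃ z ∈ closedBall z₀ r, g z = 0 := by
  by_contra hcon
  push_neg at hcon
  have hne : ∀ z ∈ closedBall z₀ r, g z ≠ 0 := hcon
  set h : ℂ → ℂ := fun z => (g z)⁻¹ with hh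
  have hcl : closure (ball z₀ r) = closedBall z₀ r := closure_ball z₀ hr.ne'
  have hdc : DiffContOnCl ℂ h (ball z₀ r) := by
    constructor
    · exact DifferentiableOn.inv (hg.differentiableOn) (fun z hz => hne z (ball_subset_closedBall hz))
    · rw [hcl]
      exact ContinuousOn.inv₀ hg.continuous.continuousOn hne
  obtain ⟨w, hwf, hwmax⟩ := Complex.exists_mem_frontier_isMaxOn_norm
    isBounded_ball (nonempty_ball.mpr hr) hdc
  rw [frontier_ball z₀ hr.ne'] at hwf
  rw [hcl] at hwmax
  have h1 : ‖h z₀‖ ≤ ‖h w‖ := hwmax (mem_closedBall_self hr.le)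
  have hgw : g w ≠ 0 := hne w (sphere_subset_closedBall hwf)
  have hgz₀ : g z₀ ≠ 0 := hne z₀ (mem_closedBall_self hr.le)
  have hm : 0 < m := lt_of_le_of_lt (norm_nonneg _) hsmall
  have h2 : ‖h w‖ = ‖g w‖⁻¹ := by simp [hh]
  have h3 : ‖h z₀‖ = ‖g z₀‖⁻¹ := by simp [hh]
  have h4 : ‖g w‖⁻¹ ≤ m⁻¹ := inv_anti₀ hm (hbig w hwf)
  have h5 : m⁻¹ < ‖g z₀‖⁻¹ := by
    apply inv_strictAnti₀ (norm_pos_iff.mpr hgz₀) hsmall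
  rw [h2] at h1; rw [h3] at h1
  linarith

open Metric in
lemma exists_good_circle (f : ℂ → ℂ) (hf : Differentiable ℂ f) (z₀ w : ℂ)
    (h0 : f z₀ = 0) (hw : f w ≠ 0) (r₀ : ℝ) (hr₀ : 0 < r₀) :
    ∃ r, 0 < r ∧ r ≤ r₀ ∧ ∃ m, 0 < m ∧ ∀ z ∈ sphere z₀ r, m ≤ ‖f z‖ := by
  have han : AnalyticAt ℂ f z₀ := (hf.analyticAt z₀)
  rcases han.eventually_eq_zero_or_eventually_ne_zero with hz | hz
  · -- f ≡ 0 near z₀ ⇒ f ≡ 0 everywhere, contradiction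
    exfalso
    have hall : Set.EqOn f 0 Set.univ := by
      apply AnalyticOnNhd.eqOn_zero_of_preconnected_of_eventuallyEq_zero
        ((hf.differentiableOn.analyticOnNhd isOpen_univ)) isPreconnected_univ (Set.mem_univ z₀)
      exact hz
    exact hw (hall (Set.mem_univ w))
  · rw [Filter.eventually_iff, mem_nhdsWithin] at hz
    obtain ⟨U, hUopen, hUz, hUsub⟩ := hz
    obtain ⟨ε, hε, hball⟩ := Metric.isOpen_iff.mp hUopen z₀ hUz
    refine ⟨min (ε/2) r₀, by positivity, min_le_right _ _, ?_⟩
    set r := min (ε/2) r₀ with hrdef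
    have hrpos : 0 < r := by positivity
    have hfz : ∀ z ∈ sphere z₀ r, f z ≠ 0 := by
      intro z hzs
      apply hUsub
      constructor
      · apply hball
        rw [mem_ball, mem_sphere_iff_norm] at *
        rw [dist_eq_norm, hzs]
        calc r ≤ ε/2 := min_le_left _ _
          _ < ε := by linarith
      · intro hzz
        rw [Set.mem_singleton_iff] at hzz
        rw [mem_sphere_iff_norm, hzz] at hzs
        simp at hzs
        linarith [hzs ▸ hrpos]
    have hcmp : IsCompact (sphere z₀ r) := isCompact_sphere z₀ r
    have hne : (sphere z₀ r).Nonempty := NormedSpace.sphere_nonempty.mpr hrpos.le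
    obtain ⟨z₁, hz₁, hmin⟩ := hcmp.exists_isMinOn hne (hf.continuous.norm.continuousOn)
    exact ⟨‖f z₁‖, norm_pos_iff.mpr (hfz z₁ hz₁), fun z hzs => hmin hzs⟩
/-- Bound constant -/
def Mbd (a b₁ b₂ c : ℝ) : ℝ :=
  max 1 (|cA a b₁ b₂| + |cB a b₁ b₂| + |cC a b₁ b₂| + |cD a b₁ b₂| + cE c * (1+b₁)*(1+b₂))

lemma one_le_Mbd (a b₁ b₂ c : ℝ) : 1 ≤ Mbd a b₁ b₂ c := le_max_left _ _

lemma zero_bound (a b₁ b₂ c : ℝ) (hb₁ : 0 < b₁) (hb₂ : 0 < b₂)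
    (t : ℝ) (ht : 0 ≤ t) (z : ℂ) (hre : 0 ≤ z.re)
    (hz : charP a b₁ b₂ c t z = 0) : ‖z‖ ≤ Mbd a b₁ b₂ c := by
  set A := cA a b₁ b₂; set B := cB a b₁ b₂; set C := cC a b₁ b₂; set D := cD a b₁ b₂
  set E := cE c with hE
  have hE0 : 0 ≤ E := sq_nonneg c
  by_contra hcon
  push_neg at hcon
  set r := ‖z‖ with hr
  have hzr : ‖z‖ = r := rfl
  have hr1 : 1 < r := lt_of_le_of_lt (le_max_left _ _) hcon
  have hrK : |A| + |B| + |C| + |D| + E*(1+b₁)*(1+b₂) < r :=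
    lt_of_le_of_lt (le_max_right _ _) hcon
  have heq : z^4 = -((A:ℂ)*z^3 + (B:ℂ)*z^2 + (C:ℂ)*z + (D:ℂ))
      + (E:ℂ) * (z + (b₁:ℂ)) * (z + (b₂:ℂ)) * Complex.exp (-(2*z*(t:ℂ))) := by
    have h' := hz
    rw [charP] at h'
    linear_combination h'
  have hexp : ‖Complex.exp (-(2*z*(t:ℂ)))‖ ≤ 1 := by
    rw [Complex.norm_exp, Real.exp_le_one_iff]
    have h2 : (-(2*z*(t:ℂ))).re = -(2 * z.re * t) := by
      simp [Complex.mul_re]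
    rw [h2]; nlinarith
  have hb : r^4 ≤ |A| * r^3 + |B| * r^2 + |C| * r + |D| + E*(r+b₁)*(r+b₂) := by
    have h0 : r^4 = ‖z^4‖ := by rw [norm_pow, hzr]
    rw [h0, heq]
    have t0 := norm_add_le (-((A:ℂ)*z^3 + (B:ℂ)*z^2 + (C:ℂ)*z + (D:ℂ)))
      ((E:ℂ) * (z + (b₁:ℂ)) * (z + (b₂:ℂ)) * Complex.exp (-(2*z*(t:ℂ))))
    rw [norm_neg] at t0
    refine le_trans t0 ?_
    have t1 := norm_add_le ((A:ℂ)*z^3 + (B:ℂ)*z^2 + (C:ℂ)*z) ((D:ℂ))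
    have t2 := norm_add_le ((A:ℂ)*z^3 + (B:ℂ)*z^2) ((C:ℂ)*z)
    have t3 := norm_add_le ((A:ℂ)*z^3) ((B:ℂ)*z^2)
    simp only [norm_mul, norm_pow, Complex.norm_real, Real.norm_eq_abs,
      ← hr] at t1 t2 t3
    have e2 : ‖z + (b₁:ℂ)‖ ≤ r + b₁ := by
      refine le_trans (norm_add_le _ _) ?_
      rw [Complex.norm_real, Real.norm_eq_abs, abs_of_nonneg hb₁.le, hzr]
    have e3 : ‖z + (b₂:ℂ)‖ ≤ r + b₂ := by
      refine le_trans (norm_add_le _ _) ?_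
      rw [Complex.norm_real, Real.norm_eq_abs, abs_of_nonneg hb₂.le, hzr]
    have e4 : ‖(E:ℂ) * (z + (b₁:ℂ)) * (z + (b₂:ℂ)) * Complex.exp (-(2*z*(t:ℂ)))‖
        ≤ E*(r+b₁)*(r+b₂) := by
      rw [norm_mul, norm_mul, norm_mul, Complex.norm_real, Real.norm_eq_abs,
        abs_of_nonneg hE0]
      have hr0 : (0:ℝ) ≤ r := norm_nonneg z
      calc E * ‖z + (b₁:ℂ)‖ * ‖z + (b₂:ℂ)‖ * ‖Complex.exp (-(2*z*(t:ℂ)))‖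
          ≤ E * (r+b₁) * (r+b₂) * 1 := by
            refine mul_le_mul ?_ hexp (norm_nonneg _) (by positivity)
            refine mul_le_mul ?_ e3 (norm_nonneg _) (by positivity)
            exact mul_le_mul le_rfl e2 (norm_nonneg _) hE0
        _ = E * (r+b₁) * (r+b₂) := by ring
    calc ‖(A:ℂ)*z^3 + (B:ℂ)*z^2 + (C:ℂ)*z + (D:ℂ)‖
          + ‖(E:ℂ) * (z + (b₁:ℂ)) * (z + (b₂:ℂ)) * Complex.exp (-(2*z*(t:ℂ)))‖
        ≤ (|A| * r^3 + |B| * r^2 + |C| * r + |D|) + E*(r+b₁)*(r+b₂) := by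
          refine add_le_add ?_ e4
          calc ‖(A:ℂ)*z^3 + (B:ℂ)*z^2 + (C:ℂ)*z + (D:ℂ)‖
              ≤ ‖(A:ℂ)*z^3 + (B:ℂ)*z^2 + (C:ℂ)*z‖ + ‖(D:ℂ)‖ := norm_add_le _ _
            _ ≤ |A| * r^3 + |B| * r^2 + |C| * r + |D| := by
                simp only [Complex.norm_real, Real.norm_eq_abs, ← hr] at t1 t2 t3 ⊢
                linarith
      _ = _ := by ring
  have hr0 : (0:ℝ) < r := lt_trans one_pos hr1
  have key := mul_lt_mul_of_pos_right hrK (show (0:ℝ) < r^3 by positivity)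
  have ta : r^2 ≤ r^3 := by nlinarith [mul_pos hr0 hr0, mul_nonneg (mul_nonneg hr0.le hr0.le) (sub_nonneg.mpr hr1.le)]
  have tb : (1:ℝ) ≤ r^3 := by nlinarith [mul_pos hr0 hr0, mul_nonneg (mul_nonneg hr0.le hr0.le) (sub_nonneg.mpr hr1.le), sq_nonneg (r-1)]
  have tc : r ≤ r^3 := by nlinarith [mul_nonneg hr0.le (sub_nonneg.mpr hr1.le), mul_nonneg (mul_nonneg hr0.le hr0.le) (sub_nonneg.mpr hr1.le)]
  have h1b : |B| * r^2 ≤ |B| * r^3 := mul_le_mul_of_nonneg_left ta (abs_nonneg B)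
  have h1c : |C| * r ≤ |C| * r^3 := mul_le_mul_of_nonneg_left tc (abs_nonneg C)
  have h1d : |D| ≤ |D| * r^3 := by
    calc |D| = |D| * 1 := (mul_one _).symm
      _ ≤ |D| * r^3 := mul_le_mul_of_nonneg_left tb (abs_nonneg D)
  have P1 : 0 ≤ E * (r^3 - r^2) := mul_nonneg hE0 (sub_nonneg.mpr ta)
  have P2 : 0 ≤ E * (b₁*b₂) * (r^3 - 1) :=
    mul_nonneg (mul_nonneg hE0 (mul_nonneg hb₁.le hb₂.le)) (sub_nonneg.mpr tb)
  have P3 : 0 ≤ E * (b₁+b₂) * (r^3 - r) :=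
    mul_nonneg (mul_nonneg hE0 (add_nonneg hb₁.le hb₂.le)) (sub_nonneg.mpr tc)
  have h1e : E*(r+b₁)*(r+b₂) ≤ E*(1+b₁)*(1+b₂)*r^3 := by nlinarith [P1, P2, P3]
  nlinarith [abs_nonneg A]
set_option maxHeartbeats 1000000 in
lemma tau0_stable (a b₁ b₂ c : ℝ)
    (RH1 : 0 < cA a b₁ b₂)
    (RH2 : cC a b₁ b₂ - cE c * (b₁+b₂) < cA a b₁ b₂ * (cB a b₁ b₂ - cE c))
    (RH3 : cE c * b₁ * b₂ < cD a b₁ b₂)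
    (RH4 : (cA a b₁ b₂)^2 * (cD a b₁ b₂ - cE c * b₁ * b₂) <
      (cC a b₁ b₂ - cE c * (b₁+b₂)) *
        (cA a b₁ b₂ * (cB a b₁ b₂ - cE c) - cC a b₁ b₂ + cE c * (b₁+b₂)))
    (z : ℂ) (hz : charP a b₁ b₂ c 0 z = 0) : z.re < 0 := by
  set A := cA a b₁ b₂ with hA
  set B := cB a b₁ b₂; set C := cC a b₁ b₂; set D := cD a b₁ b₂; set E := cE c
  set B' := B - E with hB'def
  set C' := C - E*(b₁+b₂) with hC'def
  set D' := D - E*b₁*b₂ with hD'def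
  by_contra hcon
  push_neg at hcon
  set x := z.re with hx
  set y := z.im with hy
  -- simplify the characteristic equation at τ = 0
  rw [charP, show -(2*z*((0:ℝ):ℂ)) = 0 by push_cast; ring, Complex.exp_zero, mul_one] at hz
  have hre := congrArg Complex.re hz
  have him := congrArg Complex.im hz
  simp only [pow_succ, pow_zero, one_mul, Complex.add_re, Complex.add_im, Complex.sub_re,
    Complex.sub_im, Complex.mul_re, Complex.mul_im, Complex.ofReal_re, Complex.ofReal_im,
    Complex.zero_re, Complex.zero_im] at hre him
  -- real and imaginary parts as clean equations
  have eqre : x^4 - 6*x^2*y^2 + y^4 + A*(x^3 - 3*x*y^2) + B'*(x^2 - y^2) + C'*x + D' = 0 := by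
    rw [hB'def, hC'def, hD'def]
    linear_combination hre
  have eqim : y * ((4*x + A)*y^2 - (4*x^3 + 3*A*x^2 + 2*B'*x + C')) = 0 := by
    rw [hB'def, hC'def]
    linear_combination -him
  clear hre him hz
  -- positivity of primed coefficients
  have hD' : 0 < D' := by rw [hD'def]; linarith
  have hK : 0 < A*B' - C' := by linarith
  have hRH4 : A^2*D' < C'*(A*B' - C') := by
    have h9 : A*B' - C + E*(b₁+b₂) = A*B' - C' := by rw [hC'def]; ring
    rw [← h9]; exact RH4
  have hC' : 0 < C' := by
    have hpos : 0 < C'*(A*B' - C') := lt_trans (mul_pos (pow_pos RH1 2) hD') hRH4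
    nlinarith
  have hB' : 0 < B' := by
    by_contra hb
    push_neg at hb
    nlinarith [mul_nonneg RH1.le (neg_nonneg.mpr hb)]
  rcases mul_eq_zero.mp eqim with hy0 | hfac
  · -- y = 0 : real nonnegative root impossible
    rw [hy0] at eqre
    nlinarith [pow_nonneg hcon 4, pow_nonneg hcon 3, pow_nonneg hcon 2,
      mul_nonneg RH1.le (pow_nonneg hcon 3), mul_nonneg hB'.le (pow_nonneg hcon 2),
      mul_nonneg hC'.le hcon]
  · -- y ≠ 0 case
    have hy2 : (4*x + A)*y^2 = 4*x^3 + 3*A*x^2 + 2*B'*x + C' := by linarith [sub_eq_zero.mp hfac]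
    -- the key polynomial identity
    have hF : 64*x^6 + 96*A*x^5 + (48*A^2+32*B')*x^4 + (8*A^3+32*A*B')*x^3
        + (4*B'^2+4*A*C'+8*A^2*B'-16*D')*x^2 + (2*A*B'^2+2*A^2*C'-8*A*D')*x
        + (A*B'*C' - C'^2 - A^2*D') = 0 := by
      linear_combination (-(4*x+A)^2) * eqre
        + (-6*x^2*(4*x+A) + (4*x+A)*y^2 + (4*x^3+3*A*x^2+2*B'*x+C') - 3*A*x*(4*x+A)
            - B'*(4*x+A)) * hy2
    have g1 : 0 < B'^2 + A*C' - 4*D' := by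
      nlinarith [sq_nonneg (A*B' - 2*C'), mul_pos (mul_pos RH1 RH1) RH1, mul_pos RH1 hC']
    have hx6 : 0 ≤ 64*x^6 := by positivity
    have hx5 : 0 ≤ 96*A*x^5 := by positivity
    have hx4 : 0 ≤ (48*A^2+32*B')*x^4 := by positivity
    have hx3 : 0 ≤ (8*A^3+32*A*B')*x^3 := by
      apply mul_nonneg (by positivity) (pow_nonneg hcon 3)
    have hx2 : 0 ≤ (4*B'^2+4*A*C'+8*A^2*B'-16*D')*x^2 := by
      apply mul_nonneg (by nlinarith [mul_pos (mul_pos RH1 RH1) hB']) (sq_nonneg x)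
    have hx1 : 0 ≤ (2*A*B'^2+2*A^2*C'-8*A*D')*x := by
      apply mul_nonneg (by nlinarith [mul_pos RH1 g1]) hcon
    have hx0 : 0 < A*B'*C' - C'^2 - A^2*D' := by nlinarith
    linarith
set_option maxHeartbeats 1000000 in
lemma no_imag_root (a b₁ b₂ c : ℝ) (hb₁ : 0 < b₁) (hb₂ : 0 < b₂) (hc : c ≠ 0)
    (RH3 : cE c * b₁ * b₂ < cD a b₁ b₂)
    (τ₀ : ℝ)
    (hτ₀ : τ₀ = sInf ((fun ω => tauJ a b₁ b₂ c ω 0) ''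
      {ω : ℝ | 0 < ω ∧ hq a b₁ b₂ c (ω^2) = 0}))
    (t : ℝ) (ht0 : 0 ≤ t) (htτ : t < τ₀) (y : ℝ)
    (hz : charP a b₁ b₂ c t (Complex.I * (y:ℂ)) = 0) : False := by
  have hE : 0 < cE c := by
    rw [cE]
    positivity
  -- reduce to the case y > 0 using conjugation symmetry
  have hconj : ∀ w : ℂ, charP a b₁ b₂ c t ((starRingEnd ℂ) w)
      = (starRingEnd ℂ) (charP a b₁ b₂ c t w) := by
    intro w
    rw [charP, charP]
    simp only [map_add, map_sub, map_mul, map_pow, map_neg, map_ofNat, Complex.conj_ofReal,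
      ← Complex.exp_conj]
    try ring_nf
  have main : ∀ y' : ℝ, 0 < y' → charP a b₁ b₂ c t (Complex.I * (y':ℂ)) = 0 → False := by
    intro y hy hz
    set A := cA a b₁ b₂ with hA
    set B := cB a b₁ b₂ with hB
    set C := cC a b₁ b₂ with hC
    set D := cD a b₁ b₂ with hD
    set E := cE c with hEdef
    set θ := 2*y*t with hθ
    -- rewrite the exponential
    have hexp : Complex.exp (-(2*(Complex.I * (y:ℂ))*(t:ℂ)))
        = (Real.cos θ : ℂ) - (Real.sin θ : ℂ) * Complex.I := by
      have h1 : -(2*(Complex.I * (y:ℂ))*(t:ℂ)) = ((-θ : ℝ) : ℂ) * Complex.I := by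
        rw [hθ]; push_cast; ring
      rw [h1, Complex.exp_mul_I, Complex.ofReal_neg, Complex.cos_neg, Complex.sin_neg,
        ← Complex.ofReal_cos, ← Complex.ofReal_sin]
      ring
    rw [charP, hexp] at hz
    have hre := congrArg Complex.re hz
    have him := congrArg Complex.im hz
    simp only [pow_succ, pow_zero, one_mul, Complex.add_re, Complex.add_im, Complex.sub_re,
      Complex.sub_im, Complex.mul_re, Complex.mul_im, Complex.ofReal_re, Complex.ofReal_im,
      Complex.zero_re, Complex.zero_im, Complex.I_re, Complex.I_im] at hre him
    have eqre : y^4 - B*y^2 + D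
        - E*((b₁*b₂ - y^2)*Real.cos θ + (b₁+b₂)*y*Real.sin θ) = 0 := by
      linear_combination hre
    have eqim : -A*y^3 + C*y
        - E*((b₁+b₂)*y*Real.cos θ - (b₁*b₂ - y^2)*Real.sin θ) = 0 := by
      linear_combination him
    clear hre him hz
    have hNpos : 0 < Nden a b₁ b₂ c y := by
      rw [Nden]
      have h2 : 0 < (b₁+b₂)^2*y^2 + (y^2 - b₁*b₂)^2 := by positivity
      exact mul_pos hE h2
    have hcos : bstar a b₁ b₂ c y = Real.cos θ := by
      rw [bstar, div_eq_iff hNpos.ne', Nden]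
      linear_combination (b₁*b₂ - y^2) * eqre + ((b₁+b₂)*y) * eqim
    have hsin : astar a b₁ b₂ c y = Real.sin θ := by
      rw [astar, div_eq_iff hNpos.ne', Nden]
      linear_combination ((b₁+b₂)*y) * eqre - (b₁*b₂ - y^2) * eqim
    have hpy : Real.sin θ^2 + Real.cos θ^2 = 1 := Real.sin_sq_add_cos_sq θ
    have hqroot : hq a b₁ b₂ c (y^2) = 0 := by
      simp only [hq, qP, qQ, qR, qS, ← hA, ← hB, ← hC, ← hD, ← hEdef]
      linear_combination ((y^4 - B*y^2 + D) + E*((b₁*b₂ - y^2)*Real.cos θ + (b₁+b₂)*y*Real.sin θ)) * eqre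
        + ((-A*y^3 + C*y) + E*((b₁+b₂)*y*Real.cos θ - (b₁*b₂ - y^2)*Real.sin θ)) * eqim
        + E^2*((b₁*b₂ - y^2)^2 + ((b₁+b₂)*y)^2) * hpy
    -- membership and τ₀ ≤ tauJ
    have hmem : tauJ a b₁ b₂ c y 0 ∈ ((fun ω => tauJ a b₁ b₂ c ω 0) ''
        {ω : ℝ | 0 < ω ∧ hq a b₁ b₂ c (ω^2) = 0}) := ⟨y, ⟨hy, hqroot⟩, rfl⟩
    have hbdd : BddBelow ((fun ω => tauJ a b₁ b₂ c ω 0) ''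
        {ω : ℝ | 0 < ω ∧ hq a b₁ b₂ c (ω^2) = 0}) := by
      refine ⟨0, fun v hv => ?_⟩
      obtain ⟨ω, hω, rfl⟩ := hv
      have hω0 : 0 < ω := hω.1
      unfold tauJ
      dsimp only
      split_ifs
      · apply div_nonneg _ (by linarith)
        have := Real.arccos_nonneg (bstar a b₁ b₂ c ω)
        push_cast
        linarith
      · apply div_nonneg _ (by linarith)
        have h3 := Real.arccos_le_pi (bstar a b₁ b₂ c ω)
        have h4 := Real.pi_pos
        push_cast
        linarith
    have hτ₀le : τ₀ ≤ tauJ a b₁ b₂ c y 0 := hτ₀ ▸ csInf_le hbdd hmem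
    -- bounds on cos θ give θ ≥ arccos (bstar)
    have hm1 : -1 ≤ bstar a b₁ b₂ c y := by rw [hcos]; exact Real.neg_one_le_cos θ
    have hp1 : bstar a b₁ b₂ c y ≤ 1 := by rw [hcos]; exact Real.cos_le_one θ
    have hca : Real.cos (Real.arccos (bstar a b₁ b₂ c y)) = bstar a b₁ b₂ c y :=
      Real.cos_arccos hm1 hp1
    have hθ0 : 0 ≤ θ := by rw [hθ]; positivity
    have harc : Real.arccos (bstar a b₁ b₂ c y) ≤ θ := by
      by_contra hlt
      push_neg at hlt
      have h5 : Real.cos (Real.arccos (bstar a b₁ b₂ c y)) < Real.cos θ :=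
        Real.strictAntiOn_cos
          ⟨hθ0, le_trans hlt.le (Real.arccos_le_pi _)⟩
          ⟨Real.arccos_nonneg _, Real.arccos_le_pi _⟩ hlt
      rw [hca, hcos] at h5
      exact lt_irrefl _ h5
    have hylt : 0 < 2*y := by linarith
    by_cases hsgn : 0 ≤ astar a b₁ b₂ c y
    · have htauJ : tauJ a b₁ b₂ c y 0 = Real.arccos (bstar a b₁ b₂ c y) / (2*y) := by
        unfold tauJ
        rw [if_pos hsgn]
        norm_num
      have : tauJ a b₁ b₂ c y 0 ≤ t := by
        rw [htauJ, div_le_iff₀ hylt]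
        rw [hθ] at harc
        linarith
      linarith
    · push_neg at hsgn
      have hsinneg : Real.sin θ < 0 := by rw [← hsin]; exact hsgn
      have hθpi : Real.pi < θ := by
        by_contra hle
        push_neg at hle
        have := Real.sin_nonneg_of_nonneg_of_le_pi hθ0 hle
        linarith
      have harc2 : 2*Real.pi - Real.arccos (bstar a b₁ b₂ c y) ≤ θ := by
        by_contra hlt
        push_neg at hlt
        have hφ : Real.cos (2*Real.pi - θ) = Real.cos θ := Real.cos_two_pi_sub θ
        have h6 : Real.cos (2*Real.pi - θ) < Real.cos (Real.arccos (bstar a b₁ b₂ c y)) := by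
          apply Real.strictAntiOn_cos
            ⟨Real.arccos_nonneg _, Real.arccos_le_pi _⟩
            ⟨by linarith [Real.arccos_nonneg (bstar a b₁ b₂ c y)], by linarith⟩
          linarith
        rw [hφ, hca, hcos] at h6
        exact lt_irrefl _ h6
      have htauJ : tauJ a b₁ b₂ c y 0 = (2*Real.pi - Real.arccos (bstar a b₁ b₂ c y)) / (2*y) := by
        unfold tauJ
        rw [if_neg (not_le.mpr hsgn)]
        norm_num
      have : tauJ a b₁ b₂ c y 0 ≤ t := by
        rw [htauJ, div_le_iff₀ hylt]
        rw [hθ] at harc2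
        linarith
      linarith
  -- dispatch on the sign of y
  rcases lt_trichotomy y 0 with hy | hy | hy
  · apply main (-y) (by linarith)
    have h7 : (Complex.I * ((-y:ℝ):ℂ)) = (starRingEnd ℂ) (Complex.I * (y:ℂ)) := by
      simp [Complex.ext_iff]
    rw [h7, hconj, hz, map_zero]
  · rw [hy] at hz
    rw [charP] at hz
    simp only [Complex.ofReal_zero, mul_zero, zero_mul, zero_pow, zero_add, add_zero,
      neg_zero, Complex.exp_zero, mul_one] at hz
    have h8 : ((cD a b₁ b₂ - cE c * b₁ * b₂ : ℝ) : ℂ) = 0 := by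
      push_cast
      linear_combination hz
    rw [Complex.ofReal_eq_zero] at h8
    linarith
  · exact main y hy hz
set_option maxHeartbeats 1000000 in
theorem stmt_9 (a b₁ b₂ c : ℝ) (ha : 0 < a) (hb₁ : 0 < b₁) (hb₂ : 0 < b₂)
    (hc : c ≠ 0)
    (RH1 : 0 < cA a b₁ b₂)
    (RH2 : cC a b₁ b₂ - cE c * (b₁+b₂) < cA a b₁ b₂ * (cB a b₁ b₂ - cE c))
    (RH3 : cE c * b₁ * b₂ < cD a b₁ b₂)
    (RH4 : (cA a b₁ b₂)^2 * (cD a b₁ b₂ - cE c * b₁ * b₂) <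
      (cC a b₁ b₂ - cE c * (b₁+b₂)) *
        (cA a b₁ b₂ * (cB a b₁ b₂ - cE c) - cC a b₁ b₂ + cE c * (b₁+b₂)))
    (hroot : ∃ z : ℝ, 0 < z ∧ hq a b₁ b₂ c z = 0)
    (τ₀ : ℝ)
    (hτ₀ : τ₀ = sInf ((fun ω => tauJ a b₁ b₂ c ω 0) ''
      {ω : ℝ | 0 < ω ∧ hq a b₁ b₂ c (ω^2) = 0})) :
    ∀ τ : ℝ, 0 ≤ τ → τ < τ₀ → ∀ z : ℂ, charP a b₁ b₂ c τ z = 0 → z.re < 0 := by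
  intro τ hτ0 hττ₀ z hzroot
  by_contra hre
  push_neg at hre
  set M := Mbd a b₁ b₂ c with hM
  have hM1 : (1:ℝ) ≤ M := one_le_Mbd a b₁ b₂ c
  set K : Set ℂ := {w : ℂ | 0 ≤ w.re} ∩ {w : ℂ | ‖w‖ ≤ M} with hKdef
  have hKclosed : IsClosed K :=
    IsClosed.inter (isClosed_le continuous_const Complex.continuous_re)
      (isClosed_le continuous_norm continuous_const)
  have hKcomp : IsCompact K := by
    apply (isCompact_closedBall (0:ℂ) M).of_isClosed_subset hKclosed
    intro w hw
    simpa [Metric.mem_closedBall, dist_zero_right] using hw.2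
  have hΦcont : Continuous fun p : ℝ × ℂ => charP a b₁ b₂ c p.1 p.2 := by
    unfold charP
    fun_prop
  set S : Set ℝ := {s : ℝ | s ∈ Set.Icc 0 τ ∧ ∃ w ∈ K, charP a b₁ b₂ c s w = 0} with hSdef
  have hτS : τ ∈ S := by
    refine ⟨⟨hτ0, le_refl τ⟩, z, ⟨hre, ?_⟩, hzroot⟩
    exact zero_bound a b₁ b₂ c hb₁ hb₂ τ hτ0 z hre hzroot
  set Z : Set (ℝ × ℂ) := ((Set.Icc 0 τ) ×ˢ K) ∩
    ((fun p : ℝ × ℂ => charP a b₁ b₂ c p.1 p.2) ⁻¹' {0}) with hZdef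
  have hZcomp : IsCompact Z :=
    ((isCompact_Icc).prod hKcomp).inter_right (isClosed_singleton.preimage hΦcont)
  have hSZ : S = Prod.fst '' Z := by
    ext s
    constructor
    · rintro ⟨hs1, w, hw, hw0⟩
      exact ⟨(s, w), ⟨⟨hs1, hw⟩, hw0⟩, rfl⟩
    · rintro ⟨⟨s', w⟩, ⟨⟨hs1, hw⟩, hw0⟩, rfl⟩
      exact ⟨hs1, w, hw, hw0⟩
  have hScomp : IsCompact S := hSZ ▸ hZcomp.image continuous_fst
  obtain ⟨T, hTS, hTlb⟩ := hScomp.exists_isLeast ⟨τ, hτS⟩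
  obtain ⟨⟨hT0, hTτ⟩, lam0, ⟨hlre, hlnorm⟩, hlroot⟩ := hTS
  have hTτ₀ : T < τ₀ := lt_of_le_of_lt hTτ hττ₀
  -- lam0 is not purely imaginary
  have hlrepos : 0 < lam0.re := by
    rcases eq_or_lt_of_le (show (0:ℝ) ≤ lam0.re from hlre) with heq | h
    · exfalso
      apply no_imag_root a b₁ b₂ c hb₁ hb₂ hc RH3 τ₀ hτ₀ T hT0 hTτ₀ lam0.im
      have hleq : Complex.I * (lam0.im : ℂ) = lam0 := by
        apply Complex.ext <;> simp [← heq]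
      rw [hleq]
      exact hlroot
    · exact h
  -- T is positive
  have hTpos : 0 < T := by
    rcases eq_or_lt_of_le hT0 with heq | h
    · exfalso
      have := tau0_stable a b₁ b₂ c RH1 RH2 RH3 RH4 lam0 (by rw [heq]; exact hlroot)
      linarith
    · exact h
  -- persistence setup
  have hfdiff : ∀ s : ℝ, Differentiable ℂ (charP a b₁ b₂ c s) := by
    intro s
    unfold charP
    fun_prop
  have hfw : charP a b₁ b₂ c T ((M+1 : ℝ):ℂ) ≠ 0 := by
    intro h0
    have hre' : (0:ℝ) ≤ (((M+1:ℝ)):ℂ).re := by simp; linarith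
    have hb := zero_bound a b₁ b₂ c hb₁ hb₂ T hT0 _ hre' h0
    rw [Complex.norm_real, Real.norm_eq_abs, abs_of_nonneg (by linarith)] at hb
    linarith
  obtain ⟨r, hr0, hrle, m, hm0, hsph⟩ :=
    exists_good_circle (charP a b₁ b₂ c T) (hfdiff T) lam0 _ hlroot hfw (lam0.re/2) (by linarith)
  set R := ‖lam0‖ + r with hR
  have hRpos : 0 < R := by
    have := norm_nonneg lam0
    rw [hR]; linarith
  set c₀ := cE c * (R+b₁)*(R+b₂) * (4*R) + 1 with hc₀
  have hc₀pos : 0 < c₀ := by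
    have h1 : 0 ≤ cE c := sq_nonneg c
    have : 0 ≤ cE c * (R+b₁)*(R+b₂) * (4*R) := by positivity
    linarith
  set δ := min (1/(2*R+1)) (m/c₀) with hδ
  have hδpos : 0 < δ := by
    apply lt_min (by positivity) (by positivity)
  set t := T - (min δ T)/2 with ht
  have hminpos : 0 < min δ T := lt_min hδpos hTpos
  have htpos : 0 < t := by
    rw [ht]
    have : min δ T ≤ T := min_le_right _ _
    linarith
  have htT : t < T := by rw [ht]; linarith
  have hTt : T - t ≤ δ/2 := by
    rw [ht]
    have : min δ T ≤ δ := min_le_left _ _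
    linarith
  have hTtpos : 0 < T - t := by linarith
  -- the key uniform bound on the closed ball
  have hkey : ∀ w ∈ Metric.closedBall lam0 r,
      ‖charP a b₁ b₂ c t w - charP a b₁ b₂ c T w‖ < m/2 := by
    intro w hw
    have hwnorm : ‖w‖ ≤ R := by
      have h1 : ‖w - lam0‖ ≤ r := by
        rw [← dist_eq_norm]; exact Metric.mem_closedBall.mp hw
      calc ‖w‖ = ‖lam0 + (w - lam0)‖ := by ring_nf
        _ ≤ ‖lam0‖ + ‖w - lam0‖ := norm_add_le _ _
        _ ≤ R := by rw [hR]; linarith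
    have hwre : 0 < w.re := by
      have h1 : |w.re - lam0.re| ≤ ‖w - lam0‖ := by
        have := Complex.abs_re_le_norm (w - lam0)
        simpa [Complex.sub_re] using this
      have h2 : ‖w - lam0‖ ≤ r := by
        rw [← dist_eq_norm]; exact Metric.mem_closedBall.mp hw
      have h3 := abs_le.mp (le_trans h1 h2)
      have : r ≤ lam0.re/2 := hrle
      linarith [h3.1]
    have hdiff : charP a b₁ b₂ c t w - charP a b₁ b₂ c T w
        = (cE c : ℂ) * (w + (b₁:ℂ)) * (w + (b₂:ℂ)) * Complex.exp (-(2*w*(t:ℂ)))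
          * (Complex.exp (-(2*w*((T:ℝ):ℂ)) + (2*w*(t:ℂ))) - 1) := by
      have hee : Complex.exp (-(2*w*(t:ℂ))) * Complex.exp (2*w*(t:ℂ)) = 1 := by
        rw [← Complex.exp_add]; simp
      rw [charP, charP, Complex.exp_add]
      linear_combination (-((cE c : ℂ) * (w + (b₁:ℂ)) * (w + (b₂:ℂ))
        * Complex.exp (-(2*w*((T:ℝ):ℂ))))) * hee
    rw [hdiff]
    have e1 : ‖Complex.exp (-(2*w*(t:ℂ)))‖ ≤ 1 := by
      rw [Complex.norm_exp, Real.exp_le_one_iff]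
      have h2 : (-(2*w*(t:ℂ))).re = -(2 * w.re * t) := by simp [Complex.mul_re]
      rw [h2]
      nlinarith
    have harg : -(2*w*((T:ℝ):ℂ)) + (2*w*(t:ℂ)) = -(2*w*(((T - t:ℝ)):ℂ)) := by
      push_cast; ring
    have e2 : ‖Complex.exp (-(2*w*((T:ℝ):ℂ)) + (2*w*(t:ℂ))) - 1‖ ≤ 2 * (2*R*(T-t)) := by
      rw [harg]
      have hargnorm : ‖-(2*w*(((T - t:ℝ)):ℂ))‖ ≤ 2*R*(T-t) := by
        rw [norm_neg, norm_mul, norm_mul]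
        simp only [Complex.norm_real, Real.norm_eq_abs, Complex.norm_ofNat]
        rw [abs_of_nonneg hTtpos.le]
        have : (2:ℝ) * ‖w‖ * (T-t) ≤ 2 * R * (T-t) := by nlinarith
        nlinarith [norm_nonneg w]
      have hle1 : ‖-(2*w*(((T - t:ℝ)):ℂ))‖ ≤ 1 := by
        have hd1 : T - t ≤ 1/(2*R+1)/2 := le_trans hTt (by
          have : δ ≤ 1/(2*R+1) := min_le_left _ _
          linarith)
        have hupos : (0:ℝ) ≤ 1/(2*R+1) := by positivity
        have hu' : 2*((1/(2*R+1))*R) + (1/(2*R+1)) = 1 := by field_simp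
        have hstep : 2*R*(T-t) ≤ 2*R*((1/(2*R+1))/2) :=
          mul_le_mul_of_nonneg_left hd1 (by positivity)
        refine le_trans hargnorm (le_trans hstep ?_)
        nlinarith [hupos]
      have := Complex.norm_exp_sub_one_le (x := -(2*w*(((T - t:ℝ)):ℂ))) (by
        exact hle1)
      refine le_trans this ?_
      linarith [hargnorm]
    have e3 : ‖(cE c : ℂ) * (w + (b₁:ℂ)) * (w + (b₂:ℂ))‖ ≤ cE c * (R+b₁)*(R+b₂) := by
      rw [norm_mul, norm_mul, Complex.norm_real, Real.norm_eq_abs,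
        abs_of_nonneg (show (0:ℝ) ≤ cE c from sq_nonneg c)]
      have e4 : ‖w + (b₁:ℂ)‖ ≤ R + b₁ := by
        refine le_trans (norm_add_le _ _) ?_
        rw [Complex.norm_real, Real.norm_eq_abs, abs_of_nonneg hb₁.le]
        linarith
      have e5 : ‖w + (b₂:ℂ)‖ ≤ R + b₂ := by
        refine le_trans (norm_add_le _ _) ?_
        rw [Complex.norm_real, Real.norm_eq_abs, abs_of_nonneg hb₂.le]
        linarith
      have hE0 : (0:ℝ) ≤ cE c := sq_nonneg c
      refine mul_le_mul ?_ e5 (norm_nonneg _) (by positivity)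
      exact mul_le_mul le_rfl e4 (norm_nonneg _) hE0
    calc ‖(cE c : ℂ) * (w + (b₁:ℂ)) * (w + (b₂:ℂ)) * Complex.exp (-(2*w*(t:ℂ)))
          * (Complex.exp (-(2*w*((T:ℝ):ℂ)) + (2*w*(t:ℂ))) - 1)‖
        = ‖(cE c : ℂ) * (w + (b₁:ℂ)) * (w + (b₂:ℂ))‖ * ‖Complex.exp (-(2*w*(t:ℂ)))‖
          * ‖Complex.exp (-(2*w*((T:ℝ):ℂ)) + (2*w*(t:ℂ))) - 1‖ := by
          rw [norm_mul, norm_mul]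
      _ ≤ (cE c * (R+b₁)*(R+b₂)) * 1 * (2 * (2*R*(T-t))) := by
          refine mul_le_mul ?_ e2 (norm_nonneg _) ?_
          · refine mul_le_mul e3 e1 (norm_nonneg _) ?_
            have hE0 : (0:ℝ) ≤ cE c := sq_nonneg c
            positivity
          · have hE0 : (0:ℝ) ≤ cE c := sq_nonneg c
            positivity
      _ = (c₀ - 1) * (T - t) := by rw [hc₀]; ring
      _ < m/2 := by
          have hd2 : T - t ≤ m/c₀/2 := le_trans hTt (by
            have : δ ≤ m/c₀ := min_le_right _ _
            linarith)
          have h6 : (c₀ - 1) * (T - t) < c₀ * (T - t) := by nlinarith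
          have h7 : c₀ * (T - t) ≤ c₀ * (m/c₀/2) := by
            apply mul_le_mul_of_nonneg_left hd2 hc₀pos.le
          have h8 : c₀ * (m/c₀/2) = m/2 := by field_simp
          linarith
  -- apply the zero-persistence lemma
  have hzero : ∃ w ∈ Metric.closedBall lam0 r, charP a b₁ b₂ c t w = 0 := by
    apply exists_zero_of_close (charP a b₁ b₂ c t) (hfdiff t) lam0 r (m/2) hr0
    · intro w hws
      have h1 := hsph w hws
      have h2 := hkey w (Metric.sphere_subset_closedBall hws)
      have h3 : ‖charP a b₁ b₂ c T w‖ - ‖charP a b₁ b₂ c t w - charP a b₁ b₂ c T w‖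
          ≤ ‖charP a b₁ b₂ c t w‖ := by
        have := norm_sub_norm_le (charP a b₁ b₂ c t w) (charP a b₁ b₂ c T w)
        have h4 := norm_sub_norm_le (charP a b₁ b₂ c T w) (charP a b₁ b₂ c t w)
        rw [norm_sub_rev] at h4
        linarith
      linarith
    · have h5 := hkey lam0 (Metric.mem_closedBall_self hr0.le)
      rw [hlroot, sub_zero] at h5
      exact h5
  obtain ⟨w₀, hw₀ball, hw₀root⟩ := hzero
  -- w₀ has positive real part, giving t ∈ S with t < T: contradiction
  have hw₀re : 0 ≤ w₀.re := by
    have h1 : |w₀.re - lam0.re| ≤ ‖w₀ - lam0‖ := by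
      have := Complex.abs_re_le_norm (w₀ - lam0)
      simpa [Complex.sub_re] using this
    have h2 : ‖w₀ - lam0‖ ≤ r := by
      rw [← dist_eq_norm]; exact Metric.mem_closedBall.mp hw₀ball
    have h3 := abs_le.mp (le_trans h1 h2)
    have : r ≤ lam0.re/2 := hrle
    linarith [h3.1]
  have htS : t ∈ S := by
    refine ⟨⟨htpos.le, by linarith⟩, w₀, ⟨hw₀re, ?_⟩, hw₀root⟩
    exact zero_bound a b₁ b₂ c hb₁ hb₂ t htpos.le w₀ hw₀re hw₀root
  have := hTlb htS
  linarith
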